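/- Let f : ℝⁿ → ℝⁿ be a local homeomorphism that is a proper map (preimages of compact sets are compact). Then f is a homeomorphism of ℝⁿ onto ℝⁿ. -/

import Mathlib

open Set Filter Topology

/-- Path lifting for proper local homeomorphisms. -/
theorem stmt19_lift {X : Type*} [MetricSpace X]
    {f : X → X} (hloc : IsLocalHomeomorph f) (hproper : IsProperMap f)
    (γ : ℝ → X) (hγ : Continuous γ) (x₀ : X) (h0 : f x₀ = γ 0) :
    ∃ Γ : ℝ → X, Continuous Γ ∧ Γ 0 = x₀ ∧ ∀ t ∈ Icc (0:ℝ) 1, f (Γ t) = γ t := by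
  classical
  set A : Set ℝ := {a | a ∈ Icc (0:ℝ) 1 ∧ ∃ Γ : ℝ → X, Continuous Γ ∧ Γ 0 = x₀ ∧
      ∀ t ∈ Icc (0:ℝ) a, f (Γ t) = γ t} with hA
  have h0A : (0:ℝ) ∈ A := by
    refine ⟨⟨le_refl 0, zero_le_one⟩, fun _ => x₀, continuous_const, rfl, ?_⟩
    rintro t ⟨h1, h2⟩
    rw [le_antisymm h2 h1, h0]
  have hbdd : BddAbove A := ⟨1, fun a ha => ha.1.2⟩
  set a := sSup A with ha_def
  have ha0 : 0 ≤ a := le_csSup hbdd h0A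
  have ha1 : a ≤ 1 := csSup_le ⟨0, h0A⟩ fun x hx => hx.1.2
  obtain ⟨u, hu_mono, hu_tendsto, hu_mem⟩ := exists_seq_tendsto_sSup ⟨0, h0A⟩ hbdd
  simp only [hA, mem_setOf_eq] at hu_mem
  choose huI Γs hΓc hΓ0 hΓf using hu_mem
  -- compact preimage
  have hK : IsCompact (f ⁻¹' (γ '' Icc (0:ℝ) 1)) :=
    hproper.isCompact_preimage (isCompact_Icc.image hγ)
  set p : ℕ → X := fun k => Γs k (u k) with hp
  have hpK : ∀ k, p k ∈ f ⁻¹' (γ '' Icc (0:ℝ) 1) := by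
    intro k
    have := hΓf k (u k) ⟨(huI k).1, le_refl _⟩
    exact mem_preimage.mpr ⟨u k, huI k, this.symm⟩
  obtain ⟨x', _, φ, hφ, hp_tendsto⟩ := hK.tendsto_subseq hpK
  have hfx' : f x' = γ a := by
    have h1 : Tendsto (fun m => f (p (φ m))) atTop (𝓝 (f x')) :=
      ((hloc.continuous.tendsto x').comp hp_tendsto)
    have h2 : Tendsto (fun m => γ (u (φ m))) atTop (𝓝 (γ a)) :=
      (hγ.tendsto a).comp (hu_tendsto.comp hφ.tendsto_atTop)
    refine tendsto_nhds_unique (h1.congr fun m => ?_) h2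
    exact hΓf (φ m) (u (φ m)) ⟨(huI (φ m)).1, le_refl _⟩
  obtain ⟨e, hxe, hfe⟩ := hloc x'
  have hγa : γ a ∈ e.target := by
    rw [← hfx', hfe]; exact e.map_source hxe
  obtain ⟨δ, hδ, hball⟩ := Metric.isOpen_iff.mp (e.open_target.preimage hγ) a hγa
  have hev1 : ∀ᶠ m in atTop, p (φ m) ∈ e.source :=
    hp_tendsto.eventually (e.open_source.eventually_mem hxe)
  have hev2 : ∀ᶠ m in atTop, a - δ < u (φ m) :=
    (hu_tendsto.comp hφ.tendsto_atTop).eventually (eventually_gt_nhds (by linarith))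
  obtain ⟨m, hm1, hm2⟩ := (hev1.and hev2).exists
  set c := u (φ m) with hc_def
  set Γc := Γs (φ m) with hΓc_def
  have hc0 : 0 ≤ c := (huI (φ m)).1
  have hc1 : c ≤ 1 := (huI (φ m)).2
  have hca : c ≤ a := le_csSup hbdd (by exact ⟨huI (φ m), Γs (φ m), hΓc _, hΓ0 _, hΓf _⟩)
  set b' : ℝ := min (a + δ/2) 1 with hb'_def
  have hcb' : c ≤ b' := le_min (by linarith) hc1
  have htar : ∀ t ∈ Icc c b', γ t ∈ e.target := by
    intro t ht
    apply hball
    rw [Metric.mem_ball, Real.dist_eq, abs_sub_lt_iff]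
    have := ht.1; have := ht.2
    constructor
    · have : t ≤ a + δ/2 := le_trans ht.2 (min_le_left _ _)
      linarith
    · have : a - δ < t := lt_of_lt_of_le hm2 ht.1
      linarith
  have hclamp : ∀ t : ℝ, min (max t c) b' ∈ Icc c b' := fun t =>
    ⟨le_min (le_max_right _ _) hcb', min_le_right _ _⟩
  set Γ' : ℝ → X := fun t => if t ≤ c then Γc t else e.symm (γ (min (max t c) b')) with hΓ'
  have hbr2 : Continuous fun t : ℝ => e.symm (γ (min (max t c) b')) := by
    refine e.continuousOn_symm.comp_continuous
      (hγ.comp (((continuous_id.max continuous_const).min continuous_const))) ?_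
    intro t
    exact htar _ (hclamp t)
  have hmatch : Γc c = e.symm (γ c) := by
    have h1 : f (Γc c) = γ c := hΓf (φ m) c ⟨hc0, le_refl _⟩
    rw [← h1, hfe]
    exact (e.left_inv hm1).symm
  have hΓ'c : Continuous Γ' := by
    refine Continuous.if_le (hΓc (φ m)) hbr2 continuous_id continuous_const ?_
    intro t ht
    rw [ht]
    simpa [max_self c, min_eq_left hcb'] using hmatch
  have hb'A : b' ∈ A := by
    refine ⟨⟨le_trans hc0 hcb', min_le_right _ _⟩, Γ', hΓ'c, ?_, ?_⟩
    · simp only [hΓ', if_pos hc0]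
      exact hΓ0 (φ m)
    · intro t ht
      by_cases htc : t ≤ c
      · simp only [hΓ', if_pos htc]
        exact hΓf (φ m) t ⟨ht.1, htc⟩
      · push_neg at htc
        simp only [hΓ', if_neg (not_le.mpr htc)]
        rw [max_eq_left htc.le, min_eq_left ht.2]
        have hmem := htar t ⟨htc.le, ht.2⟩
        rw [hfe]
        exact e.right_inv hmem
  have h1a : (1:ℝ) ≤ a := by
    rcases min_le_iff.mp (le_csSup hbdd hb'A) with h | h
    · linarith
    · exact h
  have hb'1 : b' = 1 := min_eq_right (by linarith)
  rw [hb'1] at hb'A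
  exact hb'A.2

theorem stmt19 (n : ℕ) (f : EuclideanSpace ℝ (Fin n) → EuclideanSpace ℝ (Fin n))
    (hloc : IsLocalHomeomorph f) (hproper : IsProperMap f) :
    IsHomeomorph f := by
  classical
  have hfc : Continuous f := hloc.continuous
  set x₀ : EuclideanSpace ℝ (Fin n) := 0 with hx₀
  set b := f x₀ with hbdef
  set H : EuclideanSpace ℝ (Fin n) → ℝ → EuclideanSpace ℝ (Fin n) :=
    fun y t => b + t • (y - b) with hH
  have hHc : Continuous fun p : EuclideanSpace ℝ (Fin n) × ℝ => H p.1 p.2 := by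
    simp only [hH]; fun_prop
  have hHy : ∀ y, Continuous (H y) := fun y => by simp only [hH]; fun_prop
  have hH0 : ∀ y, H y 0 = b := fun y => by simp [hH]
  have hH1 : ∀ y, H y 1 = y := fun y => by simp [hH]
  have hex : ∀ y, ∃ Γ, Continuous Γ ∧ Γ 0 = x₀ ∧ ∀ t ∈ Icc (0:ℝ) 1, f (Γ t) = H y t :=
    fun y => stmt19_lift hloc hproper (H y) (hHy y) x₀ (by rw [hH0])
  choose Γ hΓc hΓ0 hΓf using hex
  have uniq : ∀ (y) (cc : ℝ) (Λ : ℝ → EuclideanSpace ℝ (Fin n)), 0 ≤ cc → cc ≤ 1 →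
      Continuous Λ → Λ 0 = x₀ →
      (∀ t ∈ Icc (0:ℝ) cc, f (Λ t) = H y t) → ∀ t ∈ Icc (0:ℝ) cc, Γ y t = Λ t := by
    intro y cc Λ h0c hc1 hΛc hΛ0 hΛf
    exact (T2Space.isSeparatedMap f).eqOn_of_comp_eqOn hloc.isLocallyInjective
      isPreconnected_Icc (hΓc y).continuousOn hΛc.continuousOn
      (fun t ht => by
        simp only [Function.comp_apply]
        rw [hΓf y t ⟨ht.1, le_trans ht.2 hc1⟩, hΛf t ht])
      ⟨le_refl 0, h0c⟩ ((hΓ0 y).trans hΛ0.symm)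
  set s : EuclideanSpace ℝ (Fin n) → EuclideanSpace ℝ (Fin n) := fun y => Γ y 1 with hs
  have hfs : ∀ y, f (s y) = y := fun y => by
    have := hΓf y 1 ⟨zero_le_one, le_refl 1⟩
    rwa [hH1] at this
  -- continuity of the section s
  have hsc : Continuous s := by
    rw [continuous_iff_continuousAt]
    intro y₀
    choose ch hch hfch using fun t : ℝ => hloc (Γ y₀ t)
    obtain ⟨δ, hδ, hleb⟩ := lebesgue_number_lemma_of_metric isCompact_Icc
      (fun t : ℝ => (ch t).open_source.preimage (hΓc y₀))
      (fun t (_ : t ∈ Icc (0:ℝ) 1) => mem_iUnion.mpr ⟨t, hch t⟩)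
    obtain ⟨N0, hN0⟩ := exists_nat_one_div_lt hδ
    set N : ℕ := N0 + 1 with hN
    have hNpos : (0:ℝ) < N := by positivity
    set T : ℕ → ℝ := fun i => (i:ℝ) / N with hT
    have hT0 : T 0 = 0 := by simp [hT]
    have hTN : T N = 1 := by simp only [hT]; field_simp [hNpos.ne']
    have hTlt : ∀ i : ℕ, T i < T (i+1) := by
      intro i
      rw [hT, div_lt_div_iff_of_pos_right hNpos]
      push_cast; linarith
    have hTnonneg : ∀ i : ℕ, 0 ≤ T i := fun i => by positivity
    have hTle1 : ∀ i ≤ N, T i ≤ 1 := by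
      intro i hi
      rw [hT, div_le_one hNpos]
      exact_mod_cast hi
    have hTgap : ∀ i : ℕ, T (i+1) - T i = 1 / N := by
      intro i; simp only [hT]; push_cast; ring
    -- select a chart for each segment
    have hsel : ∀ i : ℕ, i < N → ∃ j, ∀ t ∈ Icc (T i) (T (i+1)), Γ y₀ t ∈ (ch j).source := by
      intro i hi
      obtain ⟨j, hj⟩ := hleb (T i) ⟨hTnonneg i, hTle1 i hi.le⟩
      refine ⟨j, fun t ht => hj ?_⟩
      rw [Metric.mem_ball, Real.dist_eq, abs_sub_lt_iff]
      have h1 : t - T i ≤ 1 / N := by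
        have := ht.2; have := hTgap i; linarith
      constructor
      · have : (1:ℝ)/N < δ := by rw [hN]; exact_mod_cast hN0
        linarith
      · have := ht.1; linarith [hδ]
    choose! τ hτ using hsel
    -- the chain of chart inverses
    set xs : ℕ → EuclideanSpace ℝ (Fin n) → EuclideanSpace ℝ (Fin n) :=
      fun i => Nat.casesOn i (fun _ => x₀) (fun j y => (ch (τ j)).symm (H y (T (j+1)))) with hxs
    -- main induction
    have key : ∀ i ≤ N, (∀ᶠ y in 𝓝 y₀, Γ y (T i) = xs i y) ∧ ContinuousAt (xs i) y₀ := by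
      intro i
      induction i with
      | zero =>
        intro _
        refine ⟨Eventually.of_forall fun y => ?_, continuousAt_const⟩
        rw [hT0, hΓ0 y]
        rfl
      | succ i ih =>
        intro hiN
        have hiN' : i < N := Nat.lt_of_succ_le hiN
        obtain ⟨eva, ihc⟩ := ih hiN'.le
        set ei := ch (τ i) with hei
        have hfe : f = ei := hfch (τ i)
        have hseg : ∀ t ∈ Icc (T i) (T (i+1)), Γ y₀ t ∈ ei.source := hτ i hiN'
        have hIcc01 : Icc (T i) (T (i+1)) ⊆ Icc (0:ℝ) 1 := fun t ht =>
          ⟨le_trans (hTnonneg i) ht.1, le_trans ht.2 (hTle1 (i+1) hiN)⟩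
        have htar0 : ∀ t ∈ Icc (T i) (T (i+1)), H y₀ t ∈ ei.target := by
          intro t ht
          rw [← hΓf y₀ t (hIcc01 ht), hfe]
          exact ei.map_source (hseg t ht)
        -- tube lemma
        have hU : IsOpen ((fun p : EuclideanSpace ℝ (Fin n) × ℝ => H p.1 p.2) ⁻¹' ei.target) :=
          ei.open_target.preimage hHc
        obtain ⟨v, w, hvo, hwo, hv, hw, hvw⟩ := generalized_tube_lemma isCompact_singleton
          isCompact_Icc hU (by
            rintro ⟨y, t⟩ ⟨hy, ht⟩
            obtain rfl : y = y₀ := mem_singleton_iff.mp hy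
            exact htar0 t ht)
        have evc : ∀ᶠ y in 𝓝 y₀, ∀ t ∈ Icc (T i) (T (i+1)), H y t ∈ ei.target := by
          filter_upwards [hvo.mem_nhds (hv rfl)] with y hy t ht
          exact hvw (Set.mk_mem_prod hy (hw ht))
        have hxsy₀ : xs i y₀ ∈ ei.source := by
          rw [← eva.self_of_nhds]
          exact hseg (T i) ⟨le_refl _, (hTlt i).le⟩
        have evb : ∀ᶠ y in 𝓝 y₀, xs i y ∈ ei.source :=
          ihc.eventually_mem (ei.open_source.mem_nhds hxsy₀)
        constructor
        · filter_upwards [eva, evb, evc] with y h1 h2 h3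
          have hTi01 : T i ∈ Icc (0:ℝ) 1 := hIcc01 ⟨le_refl _, (hTlt i).le⟩
          have hclamp : ∀ t : ℝ, min (max t (T i)) (T (i+1)) ∈ Icc (T i) (T (i+1)) :=
            fun t => ⟨le_min (le_max_right _ _) (hTlt i).le, min_le_right _ _⟩
          set Λ : ℝ → EuclideanSpace ℝ (Fin n) :=
            fun t => if t ≤ T i then Γ y t else ei.symm (H y (min (max t (T i)) (T (i+1)))) with hΛ
          have hbr2 : Continuous fun t : ℝ =>
              ei.symm (H y (min (max t (T i)) (T (i+1)))) := by
            refine ei.continuousOn_symm.comp_continuous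
              ((hHy y).comp ((continuous_id.max continuous_const).min continuous_const)) ?_
            intro t
            exact h3 _ (hclamp t)
          have hmatch : Γ y (T i) = ei.symm (H y (T i)) := by
            have hsrc : Γ y (T i) ∈ ei.source := h1 ▸ h2
            rw [← hΓf y (T i) hTi01, hfe]
            exact (ei.left_inv hsrc).symm
          have hΛc : Continuous Λ := by
            refine Continuous.if_le (hΓc y) hbr2 continuous_id continuous_const ?_
            intro t ht
            rw [ht]
            simpa [max_self, min_eq_left (hTlt i).le] using hmatch
          have hΛ0 : Λ 0 = x₀ := by
            simp only [hΛ, if_pos (hTnonneg i)]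
            exact hΓ0 y
          have hΛf : ∀ t ∈ Icc (0:ℝ) (T (i+1)), f (Λ t) = H y t := by
            intro t ht
            by_cases htc : t ≤ T i
            · simp only [hΛ, if_pos htc]
              exact hΓf y t ⟨ht.1, le_trans htc hTi01.2⟩
            · push_neg at htc
              simp only [hΛ, if_neg (not_le.mpr htc)]
              rw [max_eq_left htc.le, min_eq_left ht.2, hfe]
              exact ei.right_inv (h3 t ⟨htc.le, ht.2⟩)
          have := uniq y (T (i+1)) Λ (hTnonneg (i+1)) (hTle1 (i+1) hiN) hΛc hΛ0 hΛf
            (T (i+1)) ⟨hTnonneg (i+1), le_refl _⟩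
          rw [this]
          simp only [hΛ, if_neg (not_le.mpr (hTlt i))]
          rw [max_eq_left (hTlt i).le, min_self]
        · have : ContinuousAt (fun y => ei.symm (H y (T (i+1)))) y₀ := by
            refine ContinuousAt.comp ?_ ?_
            · exact ei.continuousAt_symm (htar0 (T (i+1)) ⟨(hTlt i).le, le_refl _⟩)
            · exact ((hHc.comp (continuous_id.prodMk continuous_const)).continuousAt)
          exact this
    obtain ⟨evN, hcN⟩ := key N (le_refl N)
    have hsev : s =ᶠ[𝓝 y₀] xs N := by
      filter_upwards [evN] with y hy
      rw [hs]
      simp only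
      rw [← hTN, hy]
    exact hcN.congr hsev.symm
  -- s b = x₀
  have hsb : s b = x₀ := by
    have h := uniq b 1 (fun _ => x₀) zero_le_one le_rfl continuous_const rfl
      (fun t _ => by rw [← hbdef, hH]; simp) 1 ⟨zero_le_one, le_refl 1⟩
    exact h
  -- clopen argument
  set C : Set (EuclideanSpace ℝ (Fin n)) := {x | s (f x) = x} with hC
  have hCc : IsClosed C := isClosed_eq (hsc.comp hfc) continuous_id
  have hCo : IsOpen C := by
    rw [isOpen_iff_mem_nhds]
    intro x hx
    obtain ⟨e, hxe, hfe⟩ := hloc x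
    have hx' : s (f x) = x := hx
    have h1 : ∀ᶠ z in 𝓝 x, z ∈ e.source := e.open_source.eventually_mem hxe
    have h2 : ∀ᶠ z in 𝓝 x, s (f z) ∈ e.source := by
      have hca : ContinuousAt (fun z => s (f z)) x := (hsc.comp hfc).continuousAt
      exact hca.eventually_mem (e.open_source.mem_nhds (by rw [hx']; exact hxe))
    filter_upwards [h1, h2] with z hz1 hz2
    exact e.injOn hz2 hz1 (by rw [← hfe]; exact hfs (f z))
  have hne : C.Nonempty := ⟨x₀, by show s (f x₀) = x₀; rw [← hbdef, hsb]⟩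
  have hCuniv : C = univ := IsClopen.eq_univ ⟨hCc, hCo⟩ hne
  have hsfx : ∀ x, s (f x) = x := fun x => by
    have : x ∈ C := hCuniv ▸ mem_univ x
    exact this
  refine ⟨hfc, hloc.isOpenMap, ?_, fun y => ⟨s y, hfs y⟩⟩
  intro x y hxy
  rw [← hsfx x, ← hsfx y, hxy]
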